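/- arXiv:1711.09805 — 3 statements merged into one kernel-verified Lean document; each statement's English description precedes it below -/
import Mathlib

section
/- In Shamir's (t, n) secret sharing over a finite field F with |F| > n, for any set A of at most t-1 share indices and any secret s, the joint distribution of the shares at indices in A is uniform on F^A; in particular it is independent of the secret s. -/
open scoped ENNReal

/-- Shamir `(t,n)` secret sharing over a finite field `F` with `|F| > n`: for any set `A`
of at most `t-1` share indices and any secret `s`, the joint distribution of the shares
at indices in `A` (with uniformly random coefficients) is uniform on `F^A`; in
particular it is independent of the secret `s`. -/
theorem stmt_3 {F : Type} [Field F] [Fintype F] [DecidableEq F]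
    (n t : ℕ) (hcard : n < Fintype.card F)
    (x : Fin n → F) (hx : Function.Injective x) (hx0 : ∀ i, x i ≠ 0)
    (A : Finset (Fin n)) (hA : A.card ≤ t - 1) (s : F) :
    (PMF.uniformOfFintype (Fin (t - 1) → F)).map
        (fun a (i : A) => s + ∑ j : Fin (t - 1), a j * (x i) ^ ((j : ℕ) + 1))
      = PMF.uniformOfFintype (↥A → F) := by
  classical
  set m := t - 1 with hm
  set g : (Fin m → F) → (↥A → F) :=
    fun a i => ∑ j : Fin m, a j * (x i) ^ ((j : ℕ) + 1) with hgdef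
  have hgadd : ∀ a b, g (a + b) = g a + g b := by
    intro a b
    funext i
    simp [hgdef, add_mul, Finset.sum_add_distrib]
  have hgsub : ∀ a b, g (a - b) = g a - g b := by
    intro a b
    funext i
    simp [hgdef, sub_mul, Finset.sum_sub_distrib]
  -- surjectivity of g
  have hsurj : Function.Surjective g := by
    intro c
    rcases Finset.eq_empty_or_nonempty A with hAe | hAne
    · refine ⟨0, funext fun i => ?_⟩
      exact absurd i.2 (by simp [hAe])
    · have hA1 : 1 ≤ A.card := Finset.card_pos.mpr hAne
      have hm1 : 1 ≤ m := le_trans hA1 hA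
      set r : Fin n → F := fun i => if h : i ∈ A then c ⟨i, h⟩ / x i else 0 with hr
      have hinj : Set.InjOn x (A : Set (Fin n)) := hx.injOn
      set p := Lagrange.interpolate A x r with hp
      have hdeg : p.degree < A.card := Lagrange.degree_interpolate_lt r hinj
      have hnd : p.natDegree < m := by
        by_cases hp0 : p = 0
        · rw [hp0]; simpa using Nat.lt_of_lt_of_le Nat.zero_lt_one hm1
        · rw [Polynomial.natDegree_lt_iff_degree_lt hp0]
          exact lt_of_lt_of_le hdeg (by exact_mod_cast hA)
      refine ⟨fun j => p.coeff j, funext fun i => ?_⟩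
      have hiA : (i : Fin n) ∈ A := i.2
      have heval : p.eval (x i) = c i / x i := by
        rw [hp, Lagrange.eval_interpolate_at_node r hinj hiA, hr]
        simp [hiA]
      have hsum : ∑ j : Fin m, p.coeff j * (x i) ^ ((j : ℕ) + 1)
          = (∑ j : Fin m, p.coeff j * (x i) ^ (j : ℕ)) * x i := by
        rw [Finset.sum_mul]
        refine Finset.sum_congr rfl fun j _ => ?_
        rw [pow_succ]; ring
      have hsum2 : ∑ j : Fin m, p.coeff j * (x i) ^ (j : ℕ) = p.eval (x i) := by
        rw [Polynomial.eval_eq_sum_range' hnd]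
        exact Fin.sum_univ_eq_sum_range (fun j => p.coeff j * (x i) ^ j) m
      show ∑ j : Fin m, p.coeff j * (x i) ^ ((j : ℕ) + 1) = c i
      rw [hsum, hsum2, heval, div_mul_cancel₀ _ (hx0 i)]
  -- all fibers of g have the same cardinality
  set k := Fintype.card {a : Fin m → F // g a = 0} with hk
  have hfib : ∀ y : ↥A → F, Fintype.card {a // g a = y} = k := by
    intro y
    obtain ⟨a₀, ha₀⟩ := hsurj y
    refine Fintype.card_congr ⟨fun a => ⟨a.1 - a₀, by rw [hgsub, a.2, ha₀, sub_self]⟩,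
      fun b => ⟨b.1 + a₀, by rw [hgadd, b.2, ha₀, zero_add]⟩, ?_, ?_⟩
    · intro a; ext : 1; simp
    · intro b; ext : 1; simp
  have hk0 : k ≠ 0 := by
    rw [hk]
    have : Nonempty {a : Fin m → F // g a = 0} := ⟨⟨0, by
      funext i; simp [hgdef]⟩⟩
    exact Fintype.card_ne_zero
  have hfilt : ∀ y : ↥A → F, (Finset.univ.filter (fun a => g a = y)).card = k := by
    intro y
    rw [← Fintype.card_subtype, hfib y]
  -- total count
  have htot : Fintype.card (Fin m → F) = Fintype.card (↥A → F) * k := by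
    have h1 : (Finset.univ : Finset (Fin m → F)).card
        = ∑ y : ↥A → F, (Finset.univ.filter (fun a => g a = y)).card :=
      Finset.card_eq_sum_card_fiberwise (fun a _ => Finset.mem_univ (g a))
    rw [← Finset.card_univ, h1]
    simp [hfilt]
  -- conclude
  ext b
  rw [PMF.map_apply, PMF.uniformOfFintype_apply, tsum_fintype]
  have hiff : ∀ a : Fin m → F,
      (b = fun i : ↥A => s + ∑ j : Fin m, a j * (x i) ^ ((j : ℕ) + 1))
        ↔ (g a = fun i => b i - s) := by
    intro a
    constructor
    · intro h; funext i; rw [h]; simp [hgdef]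
    · intro h
      funext i
      have := congrFun h i
      simp only [hgdef] at this ⊢
      rw [this]; ring
  simp only [hiff, PMF.uniformOfFintype_apply, ← Finset.sum_filter, Finset.sum_const,
    nsmul_eq_mul, Finset.filter_congr_decidable]
  rw [hfilt]
  have hcardβ : (Fintype.card (↥A → F) : ℝ≥0∞) ≠ 0 := by
    exact_mod_cast Fintype.card_ne_zero
  have hkE : (k : ℝ≥0∞) ≠ 0 := by exact_mod_cast hk0
  rw [htot]
  push_cast
  rw [ENNReal.mul_inv (Or.inl hcardβ) (Or.inr hkE)]
  rw [← mul_assoc, mul_comm (k : ℝ≥0∞), mul_assoc,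
    ENNReal.mul_inv_cancel hkE (ENNReal.natCast_ne_top k), mul_one]
end

section
/- Resharing preserves uniformity of below-threshold views: if a fresh Shamir sharing of the same secret is generated with independently chosen fresh random coefficients, then the joint distribution of any at most t-1 old shares together with any at most t-1 new shares is the product of two uniform distributions on F^{t-1}-subvectors, hence the new shares are statistically independent of the old shares for a below-threshold coalition. -/
open Finset
open scoped ENNReal

lemma uniform_map_of_affine {α β : Type} [Fintype α] [Nonempty α] [Fintype β] [Nonempty β]
    [DecidableEq β] [AddCommGroup α] [AddCommGroup β]
    (f : α → β) (haff : ∀ a d, f (a + d) = f a + f d - f 0)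
    (hsurj : Function.Surjective f) :
    (PMF.uniformOfFintype α).map f = PMF.uniformOfFintype β := by
  classical
  have hfib : ∀ b b' : β, Fintype.card {a // f a = b} = Fintype.card {a // f a = b'} := by
    intro b b'
    obtain ⟨d, hd⟩ := hsurj (b' - b + f 0)
    refine Fintype.card_congr ⟨fun a => ⟨a.1 + d, ?_⟩, fun a => ⟨a.1 - d, ?_⟩, ?_, ?_⟩
    · rw [haff, a.2, hd]; abel
    · have h2 := haff (a.1 - d) d
      rw [sub_add_cancel, a.2, hd] at h2
      have h3 : f (a.1 - d) = b' - ((b' - b + f 0) - f 0) := by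
        rw [eq_sub_iff_add_eq, ← add_sub_assoc]; exact h2.symm
      rw [h3]; abel
    · intro a; ext; simp
    · intro a; ext; simp
  ext b
  have hcardsum : Fintype.card α = Fintype.card β * Fintype.card {a // f a = b} := by
    rw [Fintype.card_congr (Equiv.sigmaFiberEquiv f).symm, Fintype.card_sigma]
    rw [Finset.sum_congr rfl (fun b' _ => hfib b' b), Finset.sum_const, smul_eq_mul,
      Finset.card_univ]
  have hk0 : Fintype.card {a // f a = b} ≠ 0 := by
    obtain ⟨a, ha⟩ := hsurj b
    have : Nonempty {a // f a = b} := ⟨⟨a, ha⟩⟩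
    exact Fintype.card_ne_zero
  rw [PMF.map_apply, PMF.uniformOfFintype_apply, tsum_fintype]
  trans (∑ a : α, (if f a = b then ((Fintype.card α : ℝ≥0∞))⁻¹ else 0))
  · refine Finset.sum_congr rfl fun a _ => ?_
    split_ifs with h1 h2 h2
    · exact PMF.uniformOfFintype_apply a
    · exact absurd h1.symm h2
    · exact absurd h2.symm h1
    · rfl
  · rw [← Finset.sum_filter, Finset.sum_const,
      ← Fintype.card_subtype, nsmul_eq_mul, hcardsum, Nat.cast_mul]
    rw [ENNReal.mul_inv (by simp) (by simp)]
    rw [← mul_assoc, mul_comm ((Fintype.card {a // f a = b} : ℕ) : ℝ≥0∞), mul_assoc,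
      ENNReal.mul_inv_cancel (by exact_mod_cast hk0) (by simp), mul_one]

lemma exists_interp_coeffs {F : Type} [Field F] [Fintype F] [DecidableEq F] {n m : ℕ}
    (x : Fin n → F) (hx : Function.Injective x) (hx0 : ∀ i, x i ≠ 0)
    (B : Finset (Fin n)) (hB : B.card ≤ m) (z : B → F) :
    ∃ a : Fin m → F, ∀ i : B, ∑ j : Fin m, a j * (x i.1) ^ ((j : ℕ) + 1) = z i := by
  classical
  set v : Option (Fin n) → F := fun o => o.elim 0 x with hv
  set S : Finset (Option (Fin n)) := insert none (B.image some) with hS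
  set r : Option (Fin n) → F :=
    fun o => o.elim 0 (fun i => if h : i ∈ B then z ⟨i, h⟩ else 0) with hr
  have hinj : Set.InjOn v S := by
    intro o1 h1 o2 h2 heq
    match o1, o2 with
    | none, none => rfl
    | none, some i => exact absurd heq.symm (hx0 i)
    | some i, none => exact absurd heq (hx0 i)
    | some i, some i' => exact congrArg some (hx heq)
  set q := Lagrange.interpolate S v r with hq
  have hdeg : q.degree < S.card := Lagrange.degree_interpolate_lt _ hinj
  have hScard : S.card = B.card + 1 := by
    rw [hS, Finset.card_insert_of_notMem (by simp), Finset.card_image_of_injective _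
      (Option.some_injective _)]
  have hnd : q.natDegree < m + 1 := by
    rcases eq_or_ne q 0 with h | h
    · simp [h]
    · rw [Polynomial.natDegree_lt_iff_degree_lt h]
      refine lt_of_lt_of_le hdeg ?_
      exact_mod_cast Nat.cast_le.mpr (by omega : S.card ≤ m + 1)
  have hc0 : q.coeff 0 = 0 := by
    rw [Polynomial.coeff_zero_eq_eval_zero]
    have h0 : (none : Option (Fin n)) ∈ S := Finset.mem_insert_self _ _
    have := Lagrange.eval_interpolate_at_node r hinj h0
    simpa [hv, hr, hq] using this
  refine ⟨fun j => q.coeff ((j : ℕ) + 1), fun i => ?_⟩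
  have hiS : (some i.1) ∈ S := Finset.mem_insert_of_mem (Finset.mem_image_of_mem _ i.2)
  have heval := Lagrange.eval_interpolate_at_node r hinj hiS
  have hrz : r (some i.1) = z i := by simp [hr, i.2]
  rw [hrz] at heval
  have hv' : v (some i.1) = x i.1 := rfl
  rw [hv'] at heval
  have hsum := Polynomial.eval_eq_sum_range' hnd (x i.1)
  rw [Finset.sum_range_succ'] at hsum
  rw [← heval]
  rw [hsum, hc0, Fin.sum_univ_eq_sum_range (fun j => q.coeff (j+1) * (x i.1)^(j+1))]
  simp



/-- Resharing preserves uniformity of below-threshold views: with fresh independent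
uniform coefficients for the new sharing of the same secret `s`, the joint distribution
of at most `t-1` old shares (indices `A`) together with at most `t-1` new shares
(indices `A'`) is the uniform (product) distribution; hence the new shares are
statistically independent of the old shares for a below-threshold coalition. -/
theorem stmt_5 {F : Type} [Field F] [Fintype F] [DecidableEq F]
    (n t : ℕ) (hcard : n < Fintype.card F)
    (x : Fin n → F) (hx : Function.Injective x) (hx0 : ∀ i, x i ≠ 0)
    (A A' : Finset (Fin n)) (hA : A.card ≤ t - 1) (hA' : A'.card ≤ t - 1) (s : F) :
    (PMF.uniformOfFintype ((Fin (t - 1) → F) × (Fin (t - 1) → F))).map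
        (fun aa =>
          ((fun (i : A) => s + ∑ j : Fin (t - 1), aa.1 j * (x i) ^ ((j : ℕ) + 1)),
           (fun (i : A') => s + ∑ j : Fin (t - 1), aa.2 j * (x i) ^ ((j : ℕ) + 1))))
      = PMF.uniformOfFintype ((↥A → F) × (↥A' → F)) := by

  classical
  refine uniform_map_of_affine _ ?_ ?_
  · intro aa dd
    refine Prod.ext ?_ ?_ <;> · funext i; simp [add_mul, Finset.sum_add_distrib]; ring
  · rintro ⟨y, y'⟩
    obtain ⟨a, ha⟩ := exists_interp_coeffs x hx hx0 A hA (fun i => y i - s)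
    obtain ⟨a', ha'⟩ := exists_interp_coeffs x hx hx0 A' hA' (fun i => y' i - s)
    refine ⟨(a, a'), Prod.ext ?_ ?_⟩
    · funext i; have := ha i; simp only at this ⊢; rw [this]; ring
    · funext i; have := ha' i; simp only at this ⊢; rw [this]; ring
end

section
/- Evidence-chain knowledge extraction: let n ≥ 1 and suppose there are predicates K : Data → Time → Prop (knowledge, monotone in time), a timestamp-soundness axiom and a commitment-binding axiom as below. If the adversary knows (c_n, ts_n) at time t_{n+1}, each timestamp ts_i is valid for c_i at time t_{i+1}, and each link i ∈ {2,...,n} satisfies: knowing c_i at time t_i plus a later-revealed valid decommitment of c_i to (c_{i-1}, ts_{i-1}) yields knowledge of (c_{i-1}, ts_{i-1}) at time t_i — then the adversary knew (c_1, ts_1) at time t_2, and hence knew c_1 at time t_1. -/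
/-- Evidence-chain knowledge extraction (backward induction of Theorem 2 of PROPYLA):
with a monotone knowledge predicate `K`, timestamp soundness, and the per-link
commitment-extraction implications, if the adversary knows `(cₙ, tsₙ)` at time `tₙ₊₁`
and every timestamp `tsᵢ` is valid for `cᵢ` at time `tᵢ₊₁`, then it knew `(c₁, ts₁)` at
time `t₂`, and hence knew `c₁` at time `t₁`. (Indices are 0-based: `c ⟨0,_⟩ = c₁`.) -/
theorem stmt_7 {Data Time : Type} [LinearOrder Time]
    (K : Data → Time → Prop) (pair : Data → Data → Data)
    (tst : Data → Time) (VerTs : Data → Data → Time → Bool)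
    (hMono : ∀ d t t', K d t → t ≤ t' → K d t')
    (hPair : ∀ a b t, K (pair a b) t → K a t ∧ K b t)
    (hTs : ∀ m s t, K (pair m s) t → VerTs m s t = true → K m (tst s))
    (n : ℕ) (hn : 1 ≤ n)
    (c ts : Fin n → Data) (t : Fin (n + 1) → Time) (hT : StrictMono t)
    (htst : ∀ i : Fin n, tst (ts i) = t i.castSucc)
    (hlast : K (pair (c ⟨n - 1, by omega⟩) (ts ⟨n - 1, by omega⟩)) (t (Fin.last n)))
    (hver : ∀ i : Fin n, VerTs (c i) (ts i) (t i.succ) = true)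
    (hlink : ∀ i : Fin n, 0 < (i : ℕ) → K (c i) (t i.castSucc) →
      K (pair (c ⟨(i : ℕ) - 1, by exact lt_of_le_of_lt (Nat.sub_le _ _) i.isLt⟩)
              (ts ⟨(i : ℕ) - 1, by exact lt_of_le_of_lt (Nat.sub_le _ _) i.isLt⟩))
        (t i.castSucc)) :
    K (pair (c ⟨0, hn⟩) (ts ⟨0, hn⟩)) (t ⟨1, by omega⟩) ∧ K (c ⟨0, hn⟩) (t ⟨0, by omega⟩) := by
  -- backward induction: for each d < n, knowledge of the pair at index n-1-d at time n-d
  have aux : ∀ d, ∀ h : d < n,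
      K (pair (c ⟨n - 1 - d, by omega⟩) (ts ⟨n - 1 - d, by omega⟩)) (t ⟨n - d, by omega⟩) := by
    intro d
    induction d with
    | zero =>
      intro h
      simpa [Fin.last] using hlast
    | succ d ih =>
      intro h
      have hd : d < n := by omega
      have hk : n - 1 - d < n := by omega
      have hkpos : 0 < n - 1 - d := by omega
      have hIH := ih hd
      -- get knowledge of c at the earlier time via timestamp soundness
      have hverk := hver ⟨n - 1 - d, hk⟩
      have hsucc : (⟨n - 1 - d, hk⟩ : Fin n).succ = (⟨n - d, by omega⟩ : Fin (n+1)) := by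
        ext; simp; omega
      rw [hsucc] at hverk
      have hc : K (c ⟨n - 1 - d, hk⟩) (tst (ts ⟨n - 1 - d, hk⟩)) :=
        hTs _ _ _ hIH hverk
      rw [htst] at hc
      have hlk := hlink ⟨n - 1 - d, hk⟩ hkpos hc
      have hcast : (⟨n - 1 - d, hk⟩ : Fin n).castSucc = (⟨n - (d+1), by omega⟩ : Fin (n+1)) := by
        ext; simp [Fin.castSucc]; omega
      have hidx : (n - 1 - d : ℕ) - 1 = n - 1 - (d + 1) := by omega
      rw [hcast] at hlk
      convert hlk using 3 <;> simp [Fin.ext_iff] <;> omega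
  have h1 := aux (n - 1) (by omega)
  have idx0 : (n - 1 - (n - 1) : ℕ) = 0 := by omega
  have t1 : (n - (n - 1) : ℕ) = 1 := by omega
  have hpair1 : K (pair (c ⟨0, hn⟩) (ts ⟨0, hn⟩)) (t ⟨1, by omega⟩) := by
    convert h1 using 3 <;> (try simp [Fin.ext_iff]) <;> omega
  refine ⟨hpair1, ?_⟩
  have hver0 := hver ⟨0, hn⟩
  have hs0 : (⟨0, hn⟩ : Fin n).succ = (⟨1, by omega⟩ : Fin (n+1)) := by ext; simp
  rw [hs0] at hver0
  have hc0 := hTs _ _ _ hpair1 hver0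
  rw [htst] at hc0
  exact hc0
end
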